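/- Let μ be a symmetric probability measure on ℝ and λ ∈ [0,1]. Define H_μ(z) = λ G_μ(1/√z)² + (1-λ)√z · G_μ(1/√z) for z in ℂ∖[0,∞), where √ is the branch of the square root mapping ℂ∖[0,∞) into the upper half plane. Then for a family A of symmetric probability measures, the following are equivalent: (i) A is tight; (ii) for every 0<θ<π, H_μ(z)/z → 1 as z → 0 with |arg z - π| < θ, uniformly in μ ∈ A; (iii) H_μ(x)/x → 1 as x → 0⁻ along the negative real axis, uniformly in μ ∈ A. -/

import Mathlib

open MeasureTheory Complex

/-- A probability measure on `ℝ` is symmetric if it is invariant under `x ↦ -x`. -/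
def IsSymmetricMeasure (μ : Measure ℝ) : Prop := μ.map (fun x => -x) = μ

/-- The Cauchy transform `G_μ(z) = ∫ dμ(t)/(z-t)`. -/
noncomputable def cauchyT (μ : Measure ℝ) (z : ℂ) : ℂ := ∫ t, (z - (t : ℂ))⁻¹ ∂μ

/-- The branch of the square root on `ℂ∖[0,∞)` mapping into the upper half plane:
`√z = i·(-z)^{1/2}` with the principal power. -/
noncomputable def sqrtCut (z : ℂ) : ℂ := Complex.I * (-z) ^ (1 / 2 : ℂ)

/-- The rectangular Cauchy transform with ratio `λ`:
`H_μ(z) = λ G_μ(1/√z)² + (1-λ)√z G_μ(1/√z)` for `z ∈ ℂ∖[0,∞)`. -/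
noncomputable def rectH (l : ℝ) (μ : Measure ℝ) (z : ℂ) : ℂ :=
  (l : ℂ) * (cauchyT μ (sqrtCut z)⁻¹) ^ 2 +
    (1 - (l : ℂ)) * sqrtCut z * cauchyT μ (sqrtCut z)⁻¹

/-- Tightness of a family of measures on `ℝ`. -/
def TightFamily (A : Set (Measure ℝ)) : Prop :=
  ∀ ε : ℝ, 0 < ε → ∃ M : ℝ, ∀ μ ∈ A, μ (Set.Icc (-M) M)ᶜ < ENNReal.ofReal ε

namespace RectHAux

/-! ### Generalities -/

lemma sub_real_ne {w : ℂ} (hw : w.im ≠ 0) (t : ℝ) : w - (t : ℂ) ≠ 0 := by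
  intro h; apply hw; have := congrArg Complex.im h; simpa using this

lemma abs_im_le_abs_sub (w : ℂ) (t : ℝ) : |w.im| ≤ ‖w - (t : ℂ)‖ := by
  have h : (w - (t : ℂ)).im = w.im := by simp
  calc |w.im| = |(w - (t : ℂ)).im| := by rw [h]
    _ ≤ _ := Complex.abs_im_le_norm _

lemma norm_inv_le {w : ℂ} (hw : w.im ≠ 0) (t : ℝ) :
    ‖(w - (t : ℂ))⁻¹‖ ≤ |w.im|⁻¹ := by
  rw [norm_inv]
  have h1 : (0:ℝ) < |w.im| := abs_pos.2 hw
  exact inv_anti₀ h1 (by simpa using abs_im_le_abs_sub w t)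

lemma norm_mul_inv_le {w : ℂ} (hw : w.im ≠ 0) (t : ℝ) :
    ‖(t : ℂ) * (w - (t : ℂ))⁻¹‖ ≤ 1 + |w.re| / |w.im| := by
  have h1 : (0:ℝ) < |w.im| := abs_pos.2 hw
  have h2 : (0:ℝ) < ‖w - t‖ := lt_of_lt_of_le h1 (abs_im_le_abs_sub w t)
  rw [norm_mul, norm_inv]
  have h3 : |t| ≤ ‖w - t‖ + |w.re| := by
    have h4 : |w.re - t| ≤ ‖w - t‖ := by
      have : (w - (t:ℂ)).re = w.re - t := by simp
      calc |w.re - t| = |(w - (t:ℂ)).re| := by rw [this]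
        _ ≤ _ := Complex.abs_re_le_norm _
    calc |t| = |w.re - (w.re - t)| := by ring_nf
      _ ≤ |w.re| + |w.re - t| := abs_sub _ _
      _ ≤ ‖w - t‖ + |w.re| := by linarith
  have h5 : ‖(t:ℂ)‖ = |t| := by simp
  rw [h5]
  calc |t| * ‖w - (t:ℂ)‖⁻¹ ≤ (‖w - t‖ + |w.re|) * ‖w - (t:ℂ)‖⁻¹ := by
        apply mul_le_mul_of_nonneg_right h3 (by positivity)
    _ = 1 + |w.re| / ‖w - t‖ := by
        field_simp
    _ ≤ 1 + |w.re| / |w.im| := by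
        have := div_le_div_of_nonneg_left (abs_nonneg w.re) h1 (abs_im_le_abs_sub w t)
        linarith

lemma norm_mul_inv_le' {w : ℂ} (hw : w.im ≠ 0) {M : ℝ} {t : ℝ} (ht : |t| ≤ M) :
    ‖(t : ℂ) * (w - (t : ℂ))⁻¹‖ ≤ M / |w.im| := by
  rw [norm_mul]
  have h5 : ‖(t:ℂ)‖ = |t| := by simp
  rw [h5, div_eq_mul_inv]
  exact mul_le_mul ht (norm_inv_le hw t) (norm_nonneg _) ((abs_nonneg t).trans ht)

lemma cont_inv {w : ℂ} (hw : w.im ≠ 0) : Continuous (fun t : ℝ => (w - (t : ℂ))⁻¹) :=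
  (continuous_const.sub Complex.continuous_ofReal).inv₀ (fun t => sub_real_ne hw t)

variable {μ : Measure ℝ}

lemma integrable_inv [IsProbabilityMeasure μ] {w : ℂ} (hw : w.im ≠ 0) :
    Integrable (fun t : ℝ => (w - (t : ℂ))⁻¹) μ := by
  apply Integrable.mono' (integrable_const (|w.im|⁻¹)) ((cont_inv hw).aestronglyMeasurable)
  exact Filter.Eventually.of_forall (fun t => norm_inv_le hw t)

lemma integrable_mul_inv [IsProbabilityMeasure μ] {w : ℂ} (hw : w.im ≠ 0) :
    Integrable (fun t : ℝ => (t : ℂ) * (w - (t : ℂ))⁻¹) μ := by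
  apply Integrable.mono' (integrable_const (1 + |w.re| / |w.im|))
    ((Complex.continuous_ofReal.mul (cont_inv hw)).aestronglyMeasurable)
  exact Filter.Eventually.of_forall (fun t => norm_mul_inv_le hw t)

lemma wG_sub_one [IsProbabilityMeasure μ] {w : ℂ} (hw : w.im ≠ 0) :
    w * cauchyT μ w - 1 = ∫ t, (t : ℂ) * (w - (t : ℂ))⁻¹ ∂μ := by
  have h1 : ∀ t : ℝ, (t : ℂ) * (w - (t : ℂ))⁻¹ = w * (w - (t : ℂ))⁻¹ - 1 := by
    intro t
    have h := sub_real_ne hw t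
    field_simp
    ring
  rw [MeasureTheory.integral_congr_ae (Filter.Eventually.of_forall h1)]
  rw [MeasureTheory.integral_sub ((integrable_inv hw).const_mul w) (integrable_const 1)]
  rw [MeasureTheory.integral_const_mul, MeasureTheory.integral_const]
  simp [cauchyT]

lemma key_upper [IsProbabilityMeasure μ] {w : ℂ} (hw : w.im ≠ 0) {M : ℝ} (hM : 0 ≤ M) :
    ‖w * cauchyT μ w - 1‖ ≤
      M / |w.im| + (1 + |w.re| / |w.im|) * (μ (Set.Icc (-M) M)ᶜ).toReal := by
  rw [wG_sub_one hw]
  have hs : MeasurableSet (Set.Icc (-M) M) := measurableSet_Icc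
  have hint := integrable_mul_inv (μ := μ) hw
  rw [← MeasureTheory.integral_add_compl hs hint]
  have h1 : (0:ℝ) < |w.im| := abs_pos.2 hw
  calc ‖(∫ t in Set.Icc (-M) M, (t:ℂ) * (w - t)⁻¹ ∂μ) +
        ∫ t in (Set.Icc (-M) M)ᶜ, (t:ℂ) * (w - t)⁻¹ ∂μ‖
      ≤ ‖∫ t in Set.Icc (-M) M, (t:ℂ) * (w - t)⁻¹ ∂μ‖ +
        ‖∫ t in (Set.Icc (-M) M)ᶜ, (t:ℂ) * (w - t)⁻¹ ∂μ‖ := norm_add_le _ _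
    _ ≤ (M / |w.im|) * (μ (Set.Icc (-M) M)).toReal +
        (1 + |w.re| / |w.im|) * (μ (Set.Icc (-M) M)ᶜ).toReal := by
        gcongr ?_ + ?_
        · apply norm_setIntegral_le_of_norm_le_const (measure_lt_top μ _)
          · intro t ht
            exact norm_mul_inv_le' hw (abs_le.2 ⟨ht.1, ht.2⟩)
        · apply norm_setIntegral_le_of_norm_le_const (measure_lt_top μ _)
          · intro t _
            exact norm_mul_inv_le hw t
    _ ≤ _ := by
        have h2 : (μ (Set.Icc (-M) M)).toReal ≤ 1 := by
          have := ENNReal.toReal_mono (by simp) (prob_le_one (μ := μ) (s := Set.Icc (-M) M))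
          simpa using this
        have h3 : 0 ≤ M / |w.im| := by positivity
        nlinarith [ENNReal.toReal_nonneg (a := μ (Set.Icc (-M) M))]

/-! ### Geometry of the square root branch -/

lemma sqrtCut_sq {z : ℂ} (hz : z ≠ 0) : sqrtCut z ^ 2 = z := by
  have h1 : (-z) ≠ 0 := neg_ne_zero.2 hz
  have h2 : ((-z) ^ (1/2 : ℂ)) ^ 2 = -z := by
    rw [sq, ← Complex.cpow_add _ _ h1]
    norm_num
  rw [sqrtCut, mul_pow, Complex.I_sq, h2]
  ring

lemma sqrtCut_ne_zero {z : ℂ} (hz : z ≠ 0) : sqrtCut z ≠ 0 := by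
  intro h
  apply hz
  rw [← sqrtCut_sq hz, h]
  ring

lemma arg_neg_of_sector {z : ℂ} (hz : z ≠ 0) {θ : ℝ} (hθ : θ < Real.pi)
    (harg : |Complex.arg z - Real.pi| < θ) : Complex.arg (-z) = Complex.arg z - Real.pi := by
  have hπ := Real.pi_pos
  have h2 := abs_lt.1 harg
  rcases lt_trichotomy z.im 0 with h | h | h
  · exact absurd (Complex.arg_neg_iff.2 h) (by linarith)
  · have hre : z.re < 0 := by
      by_contra hre
      push_neg at hre
      have h0 : Complex.arg z = 0 := Complex.arg_eq_zero_iff.2 ⟨hre, h⟩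
      rw [h0] at h2
      linarith [h2.1]
    have h1 : Complex.arg z = Real.pi := Complex.arg_eq_pi_iff.2 ⟨hre, h⟩
    have h2' : Complex.arg (-z) = 0 :=
      Complex.arg_eq_zero_iff.2 ⟨by simpa using hre.le, by simpa using h⟩
    rw [h1, h2']; ring
  · exact Complex.arg_neg_eq_arg_sub_pi_of_im_pos h

lemma sqrtCut_re_im (z : ℂ) :
    (sqrtCut z).re = -(Real.sqrt (‖z‖) * Real.sin (Complex.arg (-z) * (1/2))) ∧
    (sqrtCut z).im = Real.sqrt (‖z‖) * Real.cos (Complex.arg (-z) * (1/2)) := by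
  have hc : (1/2 : ℂ) = ((1/2 : ℝ) : ℂ) := by norm_num
  have hre := Complex.cpow_ofReal_re (-z) (1/2 : ℝ)
  have him := Complex.cpow_ofReal_im (-z) (1/2 : ℝ)
  have habs : ‖-z‖ = ‖z‖ := by simp
  have hsq : ‖-z‖ ^ (1/2 : ℝ) = Real.sqrt (‖z‖) := by
    rw [habs, ← Real.sqrt_eq_rpow]
  rw [hsq] at hre him
  have he : sqrtCut z = Complex.I * (-z) ^ (((1/2 : ℝ)) : ℂ) := by rw [sqrtCut, hc]
  constructor
  · rw [he, Complex.mul_re, Complex.I_re, Complex.I_im, him]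
    ring
  · rw [he, Complex.mul_im, Complex.I_re, Complex.I_im, hre]
    ring

lemma sector_bounds {z : ℂ} (hz : z ≠ 0) {θ : ℝ} (hθ0 : 0 < θ) (hθ : θ < Real.pi)
    (harg : |Complex.arg z - Real.pi| < θ) :
    Real.cos (θ/2) * Real.sqrt (‖z‖) ≤ (sqrtCut z).im ∧
    |(sqrtCut z).re| ≤ Real.sqrt (‖z‖) ∧
    Complex.normSq (sqrtCut z) = ‖z‖ := by
  obtain ⟨hre, him⟩ := sqrtCut_re_im z
  set ψ := Complex.arg (-z) with hψdef
  have hψ : |ψ| < θ := by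
    rw [hψdef, arg_neg_of_sector hz hθ harg]
    exact harg
  have hR : 0 < Real.sqrt (‖z‖) := Real.sqrt_pos.2 (norm_pos_iff.mpr hz)
  have hcos : Real.cos (θ/2) ≤ Real.cos (ψ * (1/2)) := by
    rw [← Real.cos_abs (ψ * (1/2))]
    apply Real.cos_le_cos_of_nonneg_of_le_pi (abs_nonneg _)
    · linarith [Real.pi_pos]
    · rw [abs_mul]
      have : |(1:ℝ)/2| = 1/2 := by norm_num
      rw [this]
      linarith [hψ]
  refine ⟨?_, ?_, ?_⟩
  · rw [him]
    calc Real.cos (θ/2) * Real.sqrt (‖z‖)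
        ≤ Real.cos (ψ * (1/2)) * Real.sqrt (‖z‖) := by
          apply mul_le_mul_of_nonneg_right hcos hR.le
      _ = _ := by ring
  · rw [hre, abs_neg, abs_mul, abs_of_pos hR]
    calc Real.sqrt (‖z‖) * |Real.sin (ψ * (1/2))|
        ≤ Real.sqrt (‖z‖) * 1 := by
          apply mul_le_mul_of_nonneg_left
            (abs_le.2 ⟨Real.neg_one_le_sin _, Real.sin_le_one _⟩) hR.le
      _ = _ := by ring
  · rw [Complex.normSq_apply, hre, him]
    have h1 := Real.sin_sq_add_cos_sq (ψ * (1/2))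
    have h2 : Real.sqrt (‖z‖) ^ 2 = ‖z‖ :=
      Real.sq_sqrt (norm_nonneg z)
    nlinarith

lemma rectH_div_sub_one (l : ℝ) (μ : Measure ℝ) {z : ℂ} (hz : z ≠ 0) :
    rectH l μ z / z - 1 =
      ((sqrtCut z)⁻¹ * cauchyT μ (sqrtCut z)⁻¹ - 1) *
        (1 + (l:ℂ) * ((sqrtCut z)⁻¹ * cauchyT μ (sqrtCut z)⁻¹)) := by
  have h2 := sqrtCut_sq hz
  have hne := sqrtCut_ne_zero hz
  rw [rectH]
  set ζ := sqrtCut z with hζ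
  set G := cauchyT μ ζ⁻¹ with hG
  rw [show z = ζ ^ 2 from h2.symm]
  field_simp
  ring

/-! ### The main sector estimate -/

lemma sector_est [IsProbabilityMeasure μ] {z : ℂ} (hz : z ≠ 0) {θ M : ℝ}
    (hθ0 : 0 < θ) (hθ : θ < Real.pi) (harg : |Complex.arg z - Real.pi| < θ) (hM : 0 ≤ M) :
    ‖(sqrtCut z)⁻¹ * cauchyT μ (sqrtCut z)⁻¹ - 1‖ ≤
      M * Real.sqrt (‖z‖) / Real.cos (θ/2) +
      (1 + 1 / Real.cos (θ/2)) * (μ (Set.Icc (-M) M)ᶜ).toReal := by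
  obtain ⟨h1, h2, h3⟩ := sector_bounds hz hθ0 hθ harg
  set ζ := sqrtCut z with hζdef
  set R := Real.sqrt (‖z‖) with hRdef
  set c := Real.cos (θ/2) with hcdef
  have hc : 0 < c := by
    rw [hcdef]
    apply Real.cos_pos_of_mem_Ioo
    constructor
    · linarith [Real.pi_pos]
    · linarith
  have hR : 0 < R := Real.sqrt_pos.2 (norm_pos_iff.mpr hz)
  have hζim : 0 < ζ.im := lt_of_lt_of_le (by positivity) h1
  have hnormSq : Complex.normSq ζ = R^2 := by
    rw [h3, hRdef, Real.sq_sqrt (norm_nonneg z)]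
  have hwim : (ζ⁻¹).im = -(ζ.im / R^2) := by
    rw [Complex.inv_im, hnormSq]; ring
  have hwim' : |(ζ⁻¹).im| = ζ.im / R^2 := by
    rw [hwim, abs_neg, abs_of_pos (by positivity)]
  have hwimne : (ζ⁻¹).im ≠ 0 := by
    rw [hwim]
    have : 0 < ζ.im / R^2 := by positivity
    linarith
  have hwre : |(ζ⁻¹).re| = |ζ.re| / R^2 := by
    rw [Complex.inv_re, hnormSq, abs_div, abs_of_pos (by positivity : (0:ℝ) < R^2)]
  have hk := key_upper (μ := μ) hwimne hM
  have e1 : M / |(ζ⁻¹).im| ≤ M * R / c := by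
    rw [hwim']
    calc M / (ζ.im / R^2) = M * R^2 / ζ.im := by
          field_simp
      _ ≤ M * R^2 / (c * R) := by
          apply div_le_div_of_nonneg_left ?_ (by positivity) ?_
          · positivity
          · exact h1
      _ = M * R / c := by
          field_simp
  have e2 : |(ζ⁻¹).re| / |(ζ⁻¹).im| ≤ 1/c := by
    rw [hwre, hwim']
    have hq : |ζ.re| / R^2 / (ζ.im / R^2) = |ζ.re| / ζ.im := by
      field_simp
    rw [hq]
    calc |ζ.re| / ζ.im ≤ R / (c * R) := div_le_div₀ hR.le h2 (by positivity) h1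
      _ = 1/c := by field_simp
  calc ‖ζ⁻¹ * cauchyT μ ζ⁻¹ - 1‖ = ‖ζ⁻¹ * cauchyT μ ζ⁻¹ - 1‖ := rfl
    _ ≤ M / |(ζ⁻¹).im| + (1 + |(ζ⁻¹).re| / |(ζ⁻¹).im|) * (μ (Set.Icc (-M) M)ᶜ).toReal := hk
    _ ≤ M * R / c + (1 + 1/c) * (μ (Set.Icc (-M) M)ᶜ).toReal := by
        apply add_le_add e1
        apply mul_le_mul_of_nonneg_right (by linarith) ENNReal.toReal_nonneg


/-! ### The negative real axis -/

lemma axis_w_eq {s : ℝ} : (Complex.I * (s:ℂ))⁻¹ = -Complex.I * ((s⁻¹ : ℝ) : ℂ) := by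
  rw [mul_inv, Complex.inv_I, Complex.ofReal_inv]

lemma axis_w_im {s : ℝ} (hs : 0 < s) : ((Complex.I * (s:ℂ))⁻¹).im ≠ 0 := by
  rw [axis_w_eq]
  simp [hs.ne']

lemma one_sub_ist_ne {s t : ℝ} : (1 : ℂ) - Complex.I * s * t ≠ 0 := by
  intro h
  have := congrArg Complex.re h
  simp at this

lemma axis_u (μ : Measure ℝ) {s : ℝ} (hs : 0 < s) :
    (Complex.I * (s:ℂ))⁻¹ * cauchyT μ (Complex.I * (s:ℂ))⁻¹ =
      ∫ t, ((1 : ℂ) - Complex.I * s * t)⁻¹ ∂μ := by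
  rw [cauchyT, ← MeasureTheory.integral_const_mul]
  apply MeasureTheory.integral_congr_ae (Filter.Eventually.of_forall ?_)
  intro t
  have h0 : (Complex.I * (s:ℂ)) ≠ 0 := by simp [Complex.I_ne_zero, hs.ne']
  have h1 : (Complex.I * (s:ℂ))⁻¹ - (t:ℂ) ≠ 0 := sub_real_ne (axis_w_im hs) t
  have h2 : (1 : ℂ) - Complex.I * s * t ≠ 0 := one_sub_ist_ne
  have hs' : (s:ℂ) ≠ 0 := by exact_mod_cast hs.ne'
  field_simp

lemma inv_one_sub_ist_re (s t : ℝ) :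
    (((1 : ℂ) - Complex.I * s * t)⁻¹).re = (1 + s^2 * t^2)⁻¹ := by
  rw [Complex.inv_re]
  simp [Complex.normSq_apply]
  ring_nf

lemma cont_inv_one_sub_ist (s : ℝ) :
    Continuous (fun t : ℝ => ((1 : ℂ) - Complex.I * s * t)⁻¹) := by
  apply Continuous.inv₀
  · exact continuous_const.sub (continuous_const.mul Complex.continuous_ofReal)
  · intro t; exact one_sub_ist_ne

lemma norm_inv_one_sub_ist_le (s t : ℝ) : ‖((1 : ℂ) - Complex.I * s * t)⁻¹‖ ≤ 1 := by
  rw [norm_inv]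
  apply inv_le_one_of_one_le₀ ?_
  calc (1:ℝ) = |((1 : ℂ) - Complex.I * s * t).re| := by simp
    _ ≤ ‖(1 : ℂ) - Complex.I * s * t‖ := Complex.abs_re_le_norm _

lemma integrable_inv_one_sub_ist [IsProbabilityMeasure μ] (s : ℝ) :
    Integrable (fun t : ℝ => ((1 : ℂ) - Complex.I * s * t)⁻¹) μ := by
  apply Integrable.mono' (integrable_const (1:ℝ)) (cont_inv_one_sub_ist s).aestronglyMeasurable
  exact Filter.Eventually.of_forall (fun t => norm_inv_one_sub_ist_le s t)

lemma axis_u_re [IsProbabilityMeasure μ] {s : ℝ} (hs : 0 < s) :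
    ((Complex.I * (s:ℂ))⁻¹ * cauchyT μ (Complex.I * (s:ℂ))⁻¹).re =
      ∫ t, (1 + s^2 * t^2)⁻¹ ∂μ := by
  have h := integral_re (μ := μ) (f := fun t : ℝ => ((1 : ℂ) - Complex.I * s * t)⁻¹)
    (integrable_inv_one_sub_ist s)
  simp only [RCLike.re_to_complex] at h
  rw [axis_u μ hs, ← h]
  apply MeasureTheory.integral_congr_ae (Filter.Eventually.of_forall ?_)
  intro t
  simp [inv_one_sub_ist_re s t]

lemma ge_half_on_compl {M t : ℝ} (hM : 0 < M) (ht : t ∉ Set.Icc (-M) M) :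
    (1:ℝ)/2 ≤ 1 - (1 + (M⁻¹)^2 * t^2)⁻¹ := by
  rw [Set.mem_Icc, not_and_or] at ht
  have h2 : M^2 < t^2 := by
    rcases ht with h | h
    · push_neg at h; nlinarith
    · push_neg at h; nlinarith
  have h3 : (1:ℝ) ≤ (M⁻¹)^2 * t^2 := by
    have hM2 : (0:ℝ) < M^2 := by positivity
    rw [inv_pow, inv_mul_eq_div, le_div_iff₀ hM2]
    linarith
  have h4 : (1 + (M⁻¹)^2 * t^2)⁻¹ ≤ (2:ℝ)⁻¹ := by
    apply inv_anti₀ (by norm_num) (by linarith)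
  norm_num at h4 ⊢
  linarith

lemma integrable_F [IsProbabilityMeasure μ] (s : ℝ) :
    Integrable (fun t : ℝ => (1 + s^2 * t^2)⁻¹) μ := by
  have hc : Continuous (fun t : ℝ => (1 + s^2 * t^2)⁻¹) := by
    apply Continuous.inv₀ (by continuity) (fun t => by positivity)
  apply Integrable.mono' (integrable_const (1:ℝ)) hc.aestronglyMeasurable
  apply Filter.Eventually.of_forall
  intro t
  rw [Real.norm_eq_abs, abs_of_pos (by positivity)]
  apply inv_le_one_of_one_le₀
  nlinarith [sq_nonneg (s*t)]

lemma axis_one_sub_re [IsProbabilityMeasure μ] {M : ℝ} (hM : 0 < M) :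
    (μ (Set.Icc (-M) M)ᶜ).toReal / 2 ≤
      1 - ((Complex.I * ((M⁻¹ : ℝ):ℂ))⁻¹ * cauchyT μ (Complex.I * ((M⁻¹:ℝ):ℂ))⁻¹).re := by
  have hs : (0:ℝ) < M⁻¹ := inv_pos.2 hM
  rw [axis_u_re hs]
  have hFi := integrable_F (μ := μ) (M⁻¹)
  have hgi : Integrable (fun t : ℝ => 1 - (1 + (M⁻¹)^2 * t^2)⁻¹) μ :=
    (integrable_const 1).sub hFi
  have h1 : 1 - ∫ t, (1 + (M⁻¹)^2 * t^2)⁻¹ ∂μ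
      = ∫ t, (1 - (1 + (M⁻¹)^2 * t^2)⁻¹) ∂μ := by
    rw [MeasureTheory.integral_sub (integrable_const 1) hFi, MeasureTheory.integral_const]
    simp
  rw [h1]
  have hg0 : ∀ t : ℝ, 0 ≤ 1 - (1 + (M⁻¹)^2 * t^2)⁻¹ := by
    intro t
    have h5 : (1 + (M⁻¹)^2 * t^2)⁻¹ ≤ 1 :=
      inv_le_one_of_one_le₀ (by nlinarith [sq_nonneg (M⁻¹ * t)])
    linarith
  calc (μ (Set.Icc (-M) M)ᶜ).toReal / 2
      = (1/2) * (μ (Set.Icc (-M) M)ᶜ).toReal := by ring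
    _ ≤ ∫ t in (Set.Icc (-M) M)ᶜ, (1 - (1 + (M⁻¹)^2 * t^2)⁻¹) ∂μ := by
        apply MeasureTheory.setIntegral_ge_of_const_le_real measurableSet_Icc.compl
          (measure_ne_top μ _) (fun t ht => ge_half_on_compl hM ht) hgi.integrableOn
    _ ≤ ∫ t, (1 - (1 + (M⁻¹)^2 * t^2)⁻¹) ∂μ :=
        MeasureTheory.setIntegral_le_integral hgi (Filter.Eventually.of_forall hg0)

lemma axis_lower (l : ℝ) (hl0 : 0 ≤ l) (μ : Measure ℝ) [IsProbabilityMeasure μ]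
    {M : ℝ} (hM : 0 < M) :
    (μ (Set.Icc (-M) M)ᶜ).toReal / 2 ≤
      ‖rectH l μ ((-(M⁻¹^2) : ℝ) : ℂ) / ((-(M⁻¹^2) : ℝ) : ℂ) - 1‖ := by
  have hs : (0:ℝ) < M⁻¹ := inv_pos.2 hM
  have hx0 : (-(M⁻¹^2) : ℝ) < 0 := neg_lt_zero.2 (by positivity)
  have hxC : ((-(M⁻¹^2) : ℝ) : ℂ) ≠ 0 := by
    simpa using hx0.ne
  have hζ : sqrtCut ((-(M⁻¹^2) : ℝ) : ℂ) = Complex.I * ((M⁻¹ : ℝ) : ℂ) := by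
    rw [sqrtCut]
    congr 1
    have h1 : -(((-(M⁻¹^2) : ℝ)) : ℂ) = (((M⁻¹^2 : ℝ)) : ℂ) := by push_cast; ring
    rw [h1]
    have h2 : (1/2 : ℂ) = ((1/2 : ℝ) : ℂ) := by norm_num
    rw [h2, ← Complex.ofReal_cpow (by positivity : (0:ℝ) ≤ M⁻¹^2)]
    rw [← Real.sqrt_eq_rpow, Real.sqrt_sq hs.le]
  set u := (Complex.I * ((M⁻¹ : ℝ):ℂ))⁻¹ * cauchyT μ (Complex.I * ((M⁻¹ : ℝ):ℂ))⁻¹ with hu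
  have h4 := axis_one_sub_re (μ := μ) hM
  have h5 : rectH l μ ((-(M⁻¹^2) : ℝ) : ℂ) / ((-(M⁻¹^2) : ℝ) : ℂ) - 1
      = (u - 1) * (1 + (l:ℂ) * u) := by
    rw [rectH_div_sub_one l μ hxC, hζ]
  rw [h5, norm_mul]
  have hre_u_nonneg : 0 ≤ u.re := by
    rw [hu, axis_u_re hs]
    apply MeasureTheory.integral_nonneg
    intro t
    positivity
  have a1 : 1 - u.re ≤ ‖u - 1‖ := by
    have hh : (u - 1).re = u.re - 1 := by simp
    calc 1 - u.re = -((u - 1).re) := by rw [hh]; ring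
      _ ≤ |(u - 1).re| := neg_le_abs _
      _ ≤ ‖u - 1‖ := Complex.abs_re_le_norm _
  have a2 : 1 ≤ ‖1 + (l:ℂ) * u‖ := by
    calc (1:ℝ) ≤ 1 + l * u.re := by nlinarith
      _ = (1 + (l:ℂ) * u).re := by
          simp [Complex.add_re, Complex.mul_re]
      _ ≤ ‖1 + (l:ℂ) * u‖ := Complex.re_le_norm _
  calc (μ (Set.Icc (-M) M)ᶜ).toReal / 2 ≤ 1 - u.re := h4
    _ = (1 - u.re) * 1 := by ring
    _ ≤ ‖u - 1‖ * ‖1 + (l:ℂ) * u‖ :=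
        mul_le_mul a1 a2 zero_le_one (norm_nonneg _)

end RectHAux


open RectHAux
/-- for a family `A` of symmetric probability measures on `ℝ` and
`λ ∈ [0,1]`, tightness of `A` is equivalent to the uniform convergence
`H_μ(z)/z → 1` as `z → 0` in sectors `|arg z - π| < θ`, and also to the uniform
convergence `H_μ(x)/x → 1` as `x → 0⁻` along the negative real axis. -/
theorem tight_iff_rectH (l : ℝ) (hl : l ∈ Set.Icc (0 : ℝ) 1)
    (A : Set (Measure ℝ))
    (hA : ∀ μ ∈ A, IsProbabilityMeasure μ ∧ IsSymmetricMeasure μ) :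
    (TightFamily A ↔
      ∀ θ : ℝ, 0 < θ → θ < Real.pi →
        ∀ ε : ℝ, 0 < ε → ∃ δ : ℝ, 0 < δ ∧
          ∀ μ ∈ A, ∀ z : ℂ, z ≠ 0 → ‖z‖ < δ → |Complex.arg z - Real.pi| < θ →
            ‖rectH l μ z / z - 1‖ < ε) ∧
    (TightFamily A ↔
      ∀ ε : ℝ, 0 < ε → ∃ δ : ℝ, 0 < δ ∧
        ∀ μ ∈ A, ∀ x : ℝ, -δ < x → x < 0 →
          ‖rectH l μ (x : ℂ) / (x : ℂ) - 1‖ < ε) := by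
  have hπ := Real.pi_pos
  -- (i) ⇒ (ii)
  have hsector : TightFamily A →
      ∀ θ : ℝ, 0 < θ → θ < Real.pi →
        ∀ ε : ℝ, 0 < ε → ∃ δ : ℝ, 0 < δ ∧
          ∀ μ ∈ A, ∀ z : ℂ, z ≠ 0 → ‖z‖ < δ → |Complex.arg z - Real.pi| < θ →
            ‖rectH l μ z / z - 1‖ < ε := by
    intro hT θ hθ0 hθπ ε hε
    set c := Real.cos (θ/2) with hcdef
    have hc : 0 < c := by
      rw [hcdef]
      apply Real.cos_pos_of_mem_Ioo
      constructor <;> [linarith; linarith]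
    set ε' : ℝ := min 1 (ε/3) with hε'def
    have hε' : 0 < ε' := lt_min one_pos (by linarith)
    set k : ℝ := 1 + 1/c with hkdef
    have hk : 0 < k := by positivity
    obtain ⟨M₀, hM₀⟩ := hT (ε' / (2*k)) (by positivity)
    set M := max M₀ 0 with hMdef
    have hM : 0 ≤ M := le_max_right _ _
    refine ⟨(ε' * c / (2 * (M+1)))^2, by positivity, ?_⟩
    intro μ hμ z hz habs harg
    haveI := (hA μ hμ).1
    have htail : (μ (Set.Icc (-M) M)ᶜ).toReal < ε' / (2*k) := by
      have hsub : (Set.Icc (-M) M)ᶜ ⊆ (Set.Icc (-M₀) M₀)ᶜ := by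
        apply Set.compl_subset_compl.2
        apply Set.Icc_subset_Icc (by simp [hMdef]) (le_max_left _ _)
      have h3 : μ (Set.Icc (-M) M)ᶜ < ENNReal.ofReal (ε'/(2*k)) :=
        lt_of_le_of_lt (measure_mono hsub) (hM₀ μ hμ)
      exact (ENNReal.lt_ofReal_iff_toReal_lt (measure_ne_top μ _)).1 h3
    have hR : 0 < Real.sqrt (‖z‖) := Real.sqrt_pos.2 (norm_pos_iff.mpr hz)
    have hRlt : Real.sqrt (‖z‖) < ε' * c / (2*(M+1)) := by
      have h1 := Real.sqrt_lt_sqrt (norm_nonneg z) habs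
      calc Real.sqrt (‖z‖) < Real.sqrt ((ε' * c / (2 * (M+1)))^2) := h1
        _ = ε' * c/(2*(M+1)) := Real.sqrt_sq (by positivity)
    have hu := sector_est (μ := μ) hz hθ0 hθπ harg hM
    have hub : ‖(sqrtCut z)⁻¹ * cauchyT μ (sqrtCut z)⁻¹ - 1‖ < ε' := by
      have b1 : M * Real.sqrt (‖z‖) / c < ε'/2 := by
        rw [div_lt_iff₀ hc]
        have h5 : Real.sqrt (‖z‖) * (2*(M+1)) < ε' * c := by
          rwa [lt_div_iff₀ (by positivity)] at hRlt
        nlinarith [h5, hR, hM]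
      have b2 : (1 + 1/c) * (μ (Set.Icc (-M) M)ᶜ).toReal < ε'/2 := by
        calc (1 + 1/c) * (μ (Set.Icc (-M) M)ᶜ).toReal = k * (μ (Set.Icc (-M) M)ᶜ).toReal := by
              rw [hkdef]
          _ < k * (ε'/(2*k)) := mul_lt_mul_of_pos_left htail hk
          _ = ε'/2 := by field_simp
      calc ‖(sqrtCut z)⁻¹ * cauchyT μ (sqrtCut z)⁻¹ - 1‖
          ≤ M * Real.sqrt (‖z‖) / c
            + (1 + 1/c) * (μ (Set.Icc (-M) M)ᶜ).toReal := hu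
        _ < ε'/2 + ε'/2 := by linarith
        _ = ε' := by ring
    rw [rectH_div_sub_one l μ hz, norm_mul]
    set v := (sqrtCut z)⁻¹ * cauchyT μ (sqrtCut z)⁻¹ with hvdef
    have hε'1 : ε' ≤ 1 := min_le_left _ _
    have hε'3 : ε' ≤ ε/3 := min_le_right _ _
    have hb : ‖1 + (l:ℂ) * v‖ ≤ 3 := by
      have t1 : ‖1 + (l:ℂ)*v‖ ≤ 1 + ‖(l:ℂ)*v‖ := by
        calc ‖1 + (l:ℂ)*v‖ ≤ ‖1‖ + ‖(l:ℂ)*v‖ :=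
              norm_add_le _ _
          _ = 1 + ‖(l:ℂ)*v‖ := by simp
      have t2 : ‖(l:ℂ)*v‖ ≤ ‖v‖ := by
        rw [norm_mul, Complex.norm_real, Real.norm_eq_abs, _root_.abs_of_nonneg hl.1]
        nlinarith [norm_nonneg v, hl.2]
      have t3 : ‖v‖ ≤ ‖v - 1‖ + 1 := by
        calc ‖v‖ = ‖(v - 1) + 1‖ := by ring_nf
          _ ≤ ‖v - 1‖ + ‖1‖ := norm_add_le _ _
          _ = ‖v - 1‖ + 1 := by simp
      nlinarith [hub]
    calc ‖v - 1‖ * ‖1 + (l:ℂ)*v‖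
        ≤ ‖v - 1‖ * 3 :=
          mul_le_mul_of_nonneg_left hb (norm_nonneg _)
      _ < ε' * 3 := mul_lt_mul_of_pos_right hub (by norm_num)
      _ ≤ ε := by linarith
  -- (ii) ⇒ (iii)
  have haxis_of_sector :
      (∀ θ : ℝ, 0 < θ → θ < Real.pi →
        ∀ ε : ℝ, 0 < ε → ∃ δ : ℝ, 0 < δ ∧
          ∀ μ ∈ A, ∀ z : ℂ, z ≠ 0 → ‖z‖ < δ → |Complex.arg z - Real.pi| < θ →
            ‖rectH l μ z / z - 1‖ < ε) →
      (∀ ε : ℝ, 0 < ε → ∃ δ : ℝ, 0 < δ ∧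
        ∀ μ ∈ A, ∀ x : ℝ, -δ < x → x < 0 →
          ‖rectH l μ (x : ℂ) / (x : ℂ) - 1‖ < ε) := by
    intro hS ε hε
    obtain ⟨δ, hδ, h⟩ := hS (Real.pi/2) (by linarith) (by linarith) ε hε
    refine ⟨δ, hδ, ?_⟩
    intro μ hμ x hx1 hx2
    apply h μ hμ x (by exact_mod_cast hx2.ne) ?_ ?_
    · rw [Complex.norm_real, Real.norm_eq_abs, abs_of_neg hx2]
      linarith
    · rw [Complex.arg_ofReal_of_neg hx2]
      simp [hπ]
  -- (iii) ⇒ (i)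
  have htight_of_axis :
      (∀ ε : ℝ, 0 < ε → ∃ δ : ℝ, 0 < δ ∧
        ∀ μ ∈ A, ∀ x : ℝ, -δ < x → x < 0 →
          ‖rectH l μ (x : ℂ) / (x : ℂ) - 1‖ < ε) → TightFamily A := by
    intro hax
    by_contra hT
    unfold TightFamily at hT
    push_neg at hT
    obtain ⟨ε₀, hε₀, hMall⟩ := hT
    obtain ⟨δ, hδ, hδ'⟩ := hax (ε₀/2) (by linarith)
    set M := Real.sqrt δ⁻¹ + 1 with hMdef
    have hMpos : 0 < M := by positivity
    obtain ⟨μ, hμA, hμge⟩ := hMall M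
    haveI := (hA μ hμA).1
    have hxδ : M⁻¹^2 < δ := by
      have h1 : δ⁻¹ < M^2 := by
        nlinarith [Real.sq_sqrt (le_of_lt (inv_pos.2 hδ)), Real.sqrt_nonneg δ⁻¹]
      have h2 : (M⁻¹)^2 = (M^2)⁻¹ := by rw [← inv_pow]
      rw [h2]
      have h3 := inv_strictAnti₀ (inv_pos.2 hδ) h1
      simpa using h3
    have hxx := hδ' μ hμA (-(M⁻¹^2)) (by linarith) (neg_lt_zero.2 (by positivity))
    have hlow := RectHAux.axis_lower l hl.1 μ hMpos
    have htr : ε₀ ≤ (μ (Set.Icc (-M) M)ᶜ).toReal := by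
      have := ENNReal.toReal_mono (measure_ne_top μ _) hμge
      rwa [ENNReal.toReal_ofReal hε₀.le] at this
    linarith
  exact ⟨⟨hsector, fun h => htight_of_axis (haxis_of_sector h)⟩,
    ⟨fun hT => haxis_of_sector (hsector hT), htight_of_axis⟩⟩
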